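/- The family S̃ is closed under countable unions: if (Sᵢ) is a sequence of members of S̃, then ⋃ᵢ Sᵢ ∈ S̃. Together with closure under complements and Ω ⊆ S̃, this shows S̃ is a σ-algebra. -/

import Mathlib

open scoped symmDiff ENNReal
open Filter Set Topology
open scoped Classical

/-- The outer measure induced by `μ : Ω → ℝ≥0∞`:
`μ*(E) = inf { ∑ᵢ μ(Aᵢ) : E ⊆ ⋃ᵢ Aᵢ, each Aᵢ ∈ Ω }`. -/
noncomputable def muStar {X : Type*} (Ω : Set (Set X)) (μ : Set X → ℝ≥0∞) (E : Set X) : ℝ≥0∞ :=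
  ⨅ (A : ℕ → Set X) (_ : ∀ i, A i ∈ Ω) (_ : E ⊆ ⋃ i, A i), ∑' i, μ (A i)

/-- `S̃ = { S ⊆ X : ∃ (Bₙ) in Ω with μ*(Bₙ △ S) → 0 }`. -/
def Stilde {X : Type*} (Ω : Set (Set X)) (μ : Set X → ℝ≥0∞) : Set (Set X) :=
  {S | ∃ B : ℕ → Set X, (∀ n, B n ∈ Ω) ∧
    Tendsto (fun n => muStar Ω μ (B n ∆ S)) atTop (𝓝 0)}

section Aux

variable {X : Type*} (Ω : Set (Set X)) (μ : Set X → ℝ≥0∞)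

lemma muStar_le_cover {E : Set X} {A : ℕ → Set X} (hA : ∀ i, A i ∈ Ω)
    (hcov : E ⊆ ⋃ i, A i) : muStar Ω μ E ≤ ∑' i, μ (A i) :=
  iInf_le_of_le A (iInf_le_of_le hA (iInf_le_of_le hcov le_rfl))

lemma muStar_mono {E F : Set X} (h : E ⊆ F) : muStar Ω μ E ≤ muStar Ω μ F :=
  le_iInf fun A => le_iInf fun hA => le_iInf fun hcov =>
    muStar_le_cover Ω μ hA (h.trans hcov)

lemma muStar_empty (hΩe : ∅ ∈ Ω) (hμe : μ ∅ = 0) : muStar Ω μ (∅ : Set X) = 0 :=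
  le_antisymm ((muStar_le_cover Ω μ (fun _ => hΩe) (by simp)).trans_eq (by simp [hμe]))
    zero_le

lemma muStar_eq_ofFunction (hΩe : ∅ ∈ Ω) (hμe : μ ∅ = 0) (E : Set X) :
    muStar Ω μ E = MeasureTheory.OuterMeasure.ofFunction
      (fun A => if A ∈ Ω then μ A else ⊤) (by simp [hΩe, hμe]) E := by
  rw [MeasureTheory.OuterMeasure.ofFunction_apply]
  apply le_antisymm
  · refine le_iInf fun A => le_iInf fun hcov => ?_
    by_cases hA : ∀ i, A i ∈ Ω
    · refine (muStar_le_cover Ω μ hA hcov).trans_eq (tsum_congr fun i => ?_)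
      rw [if_pos (hA i)]
    · push_neg at hA
      obtain ⟨i, hi⟩ := hA
      have htop : (∑' i, if A i ∈ Ω then μ (A i) else ⊤) = ⊤ :=
        top_le_iff.mp <| le_trans (by rw [if_neg hi]) (ENNReal.le_tsum i)
      exact le_top.trans_eq htop.symm
  · refine le_iInf fun A => le_iInf fun hA => le_iInf fun hcov => ?_
    refine le_trans (iInf_le_of_le A (iInf_le_of_le hcov le_rfl)) ?_
    exact le_of_eq (tsum_congr fun i => if_pos (hA i))

lemma muStar_iUnion_le (hΩe : ∅ ∈ Ω) (hμe : μ ∅ = 0) (E : ℕ → Set X) :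
    muStar Ω μ (⋃ i, E i) ≤ ∑' i, muStar Ω μ (E i) := by
  simp only [muStar_eq_ofFunction Ω μ hΩe hμe]
  exact MeasureTheory.measure_iUnion_le E

lemma muStar_le_add (hΩe : ∅ ∈ Ω) (hμe : μ ∅ = 0) {E F G : Set X} (h : E ⊆ F ∪ G) :
    muStar Ω μ E ≤ muStar Ω μ F + muStar Ω μ G := by
  set g : ℕ → Set X := fun i => if i = 0 then F else if i = 1 then G else ∅ with hg
  have h1 : E ⊆ ⋃ i, g i := by
    refine h.trans (union_subset ?_ ?_)
    · exact fun x hx => mem_iUnion.2 ⟨0, by simp [hg, hx]⟩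
    · exact fun x hx => mem_iUnion.2 ⟨1, by simp [hg, hx]⟩
  have h2 : (∑' i, muStar Ω μ (g i)) = muStar Ω μ F + muStar Ω μ G := by
    rw [tsum_eq_sum (s := ({0, 1} : Finset ℕ)) ?_]
    · rw [Finset.sum_pair (by norm_num : (0:ℕ) ≠ 1)]
      simp [hg]
    · intro i hi
      simp only [Finset.mem_insert, Finset.mem_singleton, not_or] at hi
      have : g i = ∅ := by simp [hg, hi.1, hi.2]
      rw [this, muStar_empty Ω μ hΩe hμe]
  calc muStar Ω μ E ≤ muStar Ω μ (⋃ i, g i) := muStar_mono Ω μ h1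
    _ ≤ ∑' i, muStar Ω μ (g i) := muStar_iUnion_le Ω μ hΩe hμe g
    _ = _ := h2

lemma omega_diff (hΩcompl : ∀ A ∈ Ω, Aᶜ ∈ Ω) (hΩunion : ∀ A ∈ Ω, ∀ B ∈ Ω, A ∪ B ∈ Ω)
    {A B : Set X} (hA : A ∈ Ω) (hB : B ∈ Ω) : A \ B ∈ Ω := by
  have : A \ B = (Aᶜ ∪ B)ᶜ := by rw [Set.compl_union, compl_compl, Set.diff_eq]
  rw [this]
  exact hΩcompl _ (hΩunion _ (hΩcompl _ hA) _ hB)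

lemma omega_biUnion (hΩe : ∅ ∈ Ω) (hΩunion : ∀ A ∈ Ω, ∀ B ∈ Ω, A ∪ B ∈ Ω)
    {B : ℕ → Set X} (hB : ∀ i, B i ∈ Ω) (n : ℕ) : (⋃ i ∈ Finset.range n, B i) ∈ Ω := by
  induction n with
  | zero => simpa using hΩe
  | succ n ih =>
    rw [Finset.range_add_one, Finset.set_biUnion_insert]
    exact hΩunion _ (hB n) _ ih

lemma omega_partialSups (hΩunion : ∀ A ∈ Ω, ∀ B ∈ Ω, A ∪ B ∈ Ω)
    {B : ℕ → Set X} (hB : ∀ i, B i ∈ Ω) (n : ℕ) : (partialSups B n : Set X) ∈ Ω := by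
  induction n with
  | zero => rw [partialSups_zero]; exact hB 0
  | succ n ih =>
    rw [partialSups_add_one]
    exact hΩunion _ ih _ (hB (n + 1))

lemma omega_disjointed (hΩcompl : ∀ A ∈ Ω, Aᶜ ∈ Ω) (hΩunion : ∀ A ∈ Ω, ∀ B ∈ Ω, A ∪ B ∈ Ω)
    {B : ℕ → Set X} (hB : ∀ i, B i ∈ Ω) (n : ℕ) : disjointed B n ∈ Ω := by
  cases n with
  | zero => rw [disjointed_zero]; exact hB 0
  | succ n =>
    rw [disjointed_add_one]
    exact omega_diff Ω hΩcompl hΩunion (hB (n + 1)) (omega_partialSups Ω hΩunion hB n)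

lemma mu_sum_range (hΩe : ∅ ∈ Ω) (hΩunion : ∀ A ∈ Ω, ∀ B ∈ Ω, A ∪ B ∈ Ω) (hμe : μ ∅ = 0)
    (hμadd : ∀ A : ℕ → Set X, (∀ i, A i ∈ Ω) → Pairwise (Function.onFun Disjoint A) →
      (⋃ i, A i) ∈ Ω → μ (⋃ i, A i) = ∑' i, μ (A i))
    {D : ℕ → Set X} (hD : ∀ i, D i ∈ Ω) (hdisj : Pairwise (Function.onFun Disjoint D)) (n : ℕ) :
    μ (⋃ i ∈ Finset.range n, D i) = ∑ i ∈ Finset.range n, μ (D i) := by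
  set f : ℕ → Set X := fun i => if i < n then D i else ∅ with hf
  have hfΩ : ∀ i, f i ∈ Ω := fun i => by
    simp only [hf]; split_ifs; exacts [hD i, hΩe]
  have hfd : Pairwise (Function.onFun Disjoint f) := by
    intro i j hij
    simp only [Function.onFun, hf]
    split_ifs
    · exact hdisj hij
    · exact Set.disjoint_empty _
    · exact Set.empty_disjoint _
    · exact Set.disjoint_empty _
  have hfu : (⋃ i, f i) = ⋃ i ∈ Finset.range n, D i := by
    ext x
    simp only [mem_iUnion, Finset.mem_range, hf]
    constructor
    · rintro ⟨i, hx⟩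
      by_cases h : i < n
      · exact ⟨i, h, by simpa [h] using hx⟩
      · simp [h] at hx
    · rintro ⟨i, hi, hx⟩
      exact ⟨i, by simp [hi, hx]⟩
  have h1 : μ (⋃ i, f i) = ∑' i, μ (f i) :=
    hμadd f hfΩ hfd (hfu ▸ omega_biUnion Ω hΩe hΩunion hD n)
  have h2 : (∑' i, μ (f i)) = ∑ i ∈ Finset.range n, μ (f i) := by
    refine tsum_eq_sum fun i hi => ?_
    rw [Finset.mem_range] at hi
    simp [hf, hi, hμe]
  rw [← hfu, h1, h2]
  refine Finset.sum_congr rfl fun i hi => ?_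
  rw [Finset.mem_range] at hi
  simp [hf, hi]

lemma mu_le_univ (hΩe : ∅ ∈ Ω) (hΩcompl : ∀ A ∈ Ω, Aᶜ ∈ Ω)
    (hΩunion : ∀ A ∈ Ω, ∀ B ∈ Ω, A ∪ B ∈ Ω) (hμe : μ ∅ = 0)
    (hμadd : ∀ A : ℕ → Set X, (∀ i, A i ∈ Ω) → Pairwise (Function.onFun Disjoint A) →
      (⋃ i, A i) ∈ Ω → μ (⋃ i, A i) = ∑' i, μ (A i))
    {A : Set X} (hA : A ∈ Ω) : μ A ≤ μ Set.univ := by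
  set D : ℕ → Set X := fun i => if i = 0 then A else if i = 1 then Aᶜ else ∅ with hD
  have hDΩ : ∀ i, D i ∈ Ω := fun i => by
    simp only [hD]; split_ifs; exacts [hA, hΩcompl _ hA, hΩe]
  have hDdisj : Pairwise (Function.onFun Disjoint D) := by
    intro i j hij
    simp only [Function.onFun, hD]
    rcases i with _ | _ | i <;> rcases j with _ | _ | j <;>
      simp_all [disjoint_compl_right, disjoint_compl_left,
        Set.disjoint_empty, Set.empty_disjoint]
  have hU : (⋃ i ∈ Finset.range 2, D i) = Set.univ := by
    apply Set.eq_univ_of_forall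
    intro x
    by_cases hx : x ∈ A
    · exact Set.mem_biUnion (by norm_num : (0:ℕ) ∈ Finset.range 2) (by simp [hD, hx])
    · exact Set.mem_biUnion (by norm_num : (1:ℕ) ∈ Finset.range 2) (by simp [hD, hx])
  have := mu_sum_range Ω μ hΩe hΩunion hμe hμadd hDΩ hDdisj 2
  rw [hU] at this
  rw [this, Finset.sum_range_succ, Finset.sum_range_one]
  have h0 : D 0 = A := by simp [hD]
  rw [h0]
  exact le_add_right le_rfl

end Aux

/-- `S̃` is closed under countable unions; together with closure under complements
and `Ω ⊆ S̃`, this shows `S̃` is a σ-algebra. -/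
theorem stmt_11 {X : Type*} (Ω : Set (Set X)) (μ : Set X → ℝ≥0∞)
    (hΩempty : ∅ ∈ Ω) (hΩuniv : Set.univ ∈ Ω)
    (hΩcompl : ∀ A ∈ Ω, Aᶜ ∈ Ω) (hΩunion : ∀ A ∈ Ω, ∀ B ∈ Ω, A ∪ B ∈ Ω)
    (hμempty : μ ∅ = 0) (hμfin : μ Set.univ < ⊤)
    (hμadd : ∀ A : ℕ → Set X, (∀ i, A i ∈ Ω) → Pairwise (Function.onFun Disjoint A) →
      (⋃ i, A i) ∈ Ω → μ (⋃ i, A i) = ∑' i, μ (A i)) :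
    (∀ S : ℕ → Set X, (∀ i, S i ∈ Stilde Ω μ) → (⋃ i, S i) ∈ Stilde Ω μ) ∧
      (∀ S ∈ Stilde Ω μ, Sᶜ ∈ Stilde Ω μ) ∧ Ω ⊆ Stilde Ω μ := by
  have hgeo : (∑' i : ℕ, (2⁻¹ : ℝ≥0∞) ^ (i + 1)) = 1 := by
    calc (∑' i : ℕ, (2⁻¹ : ℝ≥0∞) ^ (i + 1)) = ∑' i : ℕ, 2⁻¹ * 2⁻¹ ^ i := by
          refine tsum_congr fun i => ?_; rw [pow_succ, mul_comm]
      _ = 2⁻¹ * ∑' i : ℕ, (2⁻¹ : ℝ≥0∞) ^ i := ENNReal.tsum_mul_left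
      _ = 2⁻¹ * (1 - 2⁻¹)⁻¹ := by rw [ENNReal.tsum_geometric]
      _ = 1 := by
          rw [ENNReal.one_sub_inv_two]
          exact ENNReal.mul_inv_cancel (by norm_num) (by norm_num)
  refine ⟨?_, ?_, ?_⟩
  · -- countable unions
    intro S hS
    have key : ∀ ε : ℝ≥0∞, ε ≠ 0 → ∃ C ∈ Ω, muStar Ω μ (C ∆ ⋃ i, S i) ≤ ε := by
      intro ε hε
      have hhalf : (0 : ℝ≥0∞) < ε / 2 := ENNReal.div_pos hε (by norm_num)
      have hsel : ∀ i : ℕ, ∃ C, C ∈ Ω ∧ muStar Ω μ (C ∆ S i) ≤ ε / 2 * 2⁻¹ ^ (i + 1) := by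
        intro i
        obtain ⟨Bs, hBs, ht⟩ := hS i
        have hpos : (0 : ℝ≥0∞) < ε / 2 * 2⁻¹ ^ (i + 1) :=
          ENNReal.mul_pos hhalf.ne' (pow_ne_zero _ (by norm_num))
        obtain ⟨m, hm⟩ := (ht.eventually_le_const hpos).exists
        exact ⟨Bs m, hBs m, hm⟩
      choose B hBΩ hBle using hsel
      set D := disjointed B with hDdef
      have hDΩ : ∀ i, D i ∈ Ω := omega_disjointed Ω hΩcompl hΩunion hBΩ
      have hDdisj : Pairwise (Function.onFun Disjoint D) := disjoint_disjointed B
      have hDsum : (∑' i, μ (D i)) ≠ ⊤ := by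
        refine ne_top_of_le_ne_top hμfin.ne ?_
        rw [ENNReal.tsum_eq_iSup_sum]
        refine iSup_le fun s => ?_
        obtain ⟨n, hn⟩ := s.exists_nat_subset_range
        calc (∑ i ∈ s, μ (D i)) ≤ ∑ i ∈ Finset.range n, μ (D i) :=
              Finset.sum_le_sum_of_subset hn
          _ = μ (⋃ i ∈ Finset.range n, D i) :=
              (mu_sum_range Ω μ hΩempty hΩunion hμempty hμadd hDΩ hDdisj n).symm
          _ ≤ μ Set.univ := mu_le_univ Ω μ hΩempty hΩcompl hΩunion hμempty hμadd
              (omega_biUnion Ω hΩempty hΩunion hDΩ n)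
      have htail : Tendsto (fun n => ∑' i, μ (D (i + n))) atTop (𝓝 0) :=
        ENNReal.tendsto_sum_nat_add _ hDsum
      obtain ⟨n, hn⟩ := (htail.eventually_le_const hhalf).exists
      refine ⟨⋃ i ∈ Finset.range n, B i, omega_biUnion Ω hΩempty hΩunion hBΩ n, ?_⟩
      have hincl : (⋃ i ∈ Finset.range n, B i) ∆ (⋃ i, S i) ⊆
          (⋃ i, B i ∆ S i) ∪ ⋃ i, D (i + n) := by
        intro x hx
        rw [Set.mem_symmDiff] at hx
        rcases hx with ⟨hxC, hxT⟩ | ⟨hxT, hxC⟩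
        · obtain ⟨i, _, hxB⟩ := by
            simpa only [mem_iUnion, Finset.mem_range, exists_prop] using hxC
          exact Or.inl (mem_iUnion.2 ⟨i, Set.mem_symmDiff.2
            (Or.inl ⟨hxB, fun h => hxT (mem_iUnion.2 ⟨i, h⟩)⟩)⟩)
        · by_cases hxU : x ∈ ⋃ i, B i
          · have hxD : x ∈ ⋃ i, D i := by rw [hDdef, iUnion_disjointed]; exact hxU
            obtain ⟨j, hj⟩ := mem_iUnion.1 hxD
            have hjn : n ≤ j := by
              by_contra h
              push_neg at h
              exact hxC (mem_iUnion.2 ⟨j, mem_iUnion.2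
                ⟨Finset.mem_range.2 h, disjointed_le B j hj⟩⟩)
            exact Or.inr (mem_iUnion.2 ⟨j - n, by rw [Nat.sub_add_cancel hjn]; exact hj⟩)
          · obtain ⟨j, hj⟩ := mem_iUnion.1 hxT
            exact Or.inl (mem_iUnion.2 ⟨j, Set.mem_symmDiff.2
              (Or.inr ⟨hj, fun h => hxU (mem_iUnion.2 ⟨j, h⟩)⟩)⟩)
      calc muStar Ω μ ((⋃ i ∈ Finset.range n, B i) ∆ ⋃ i, S i)
          ≤ muStar Ω μ (⋃ i, B i ∆ S i) + muStar Ω μ (⋃ i, D (i + n)) :=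
            muStar_le_add Ω μ hΩempty hμempty hincl
        _ ≤ (∑' i, muStar Ω μ (B i ∆ S i)) + ∑' i, μ (D (i + n)) :=
            add_le_add (muStar_iUnion_le Ω μ hΩempty hμempty _)
              (muStar_le_cover Ω μ (fun i => hDΩ (i + n)) subset_rfl)
        _ ≤ (∑' i : ℕ, ε / 2 * 2⁻¹ ^ (i + 1)) + ε / 2 :=
            add_le_add (ENNReal.tsum_le_tsum hBle) hn
        _ = ε / 2 + ε / 2 := by rw [ENNReal.tsum_mul_left, hgeo, mul_one]
        _ = ε := ENNReal.add_halves ε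
    have hsel2 : ∀ k : ℕ, ∃ C, C ∈ Ω ∧ muStar Ω μ (C ∆ ⋃ i, S i) ≤ 2⁻¹ ^ k := by
      intro k
      obtain ⟨C, h1, h2⟩ := key ((2⁻¹ : ℝ≥0∞) ^ k) (pow_ne_zero _ (by norm_num))
      exact ⟨C, h1, h2⟩
    choose C hCΩ hCle using hsel2
    exact ⟨C, hCΩ, tendsto_of_tendsto_of_tendsto_of_le_of_le tendsto_const_nhds
      (ENNReal.tendsto_pow_atTop_nhds_zero_of_lt_one (by norm_num))
      (fun n => zero_le) hCle⟩
  · -- complements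
    rintro S ⟨B, hB, ht⟩
    exact ⟨fun n => (B n)ᶜ, fun n => hΩcompl _ (hB n),
      by simpa only [compl_symmDiff_compl] using ht⟩
  · -- Ω ⊆ S̃
    intro A hA
    refine ⟨fun _ => A, fun _ => hA, ?_⟩
    have h0 : (fun _ : ℕ => muStar Ω μ (A ∆ A)) = fun _ => 0 := funext fun _ => by
      rw [symmDiff_self, Set.bot_eq_empty, muStar_empty Ω μ hΩempty hμempty]
    rw [h0]
    exact tendsto_const_nhds
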